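/- Inverse theorem for U³(𝔽₅ⁿ), converse direction: Let W ≤ 𝔽₅ⁿ be a linear subspace, let f : 𝔽₅ⁿ → ℂ be any function, let y ∈ 𝔽₅ⁿ, and let φ be a locally quadratic phase function on the coset y + W. Then ‖f‖_{U³(𝔽₅ⁿ)} ≥ 5^{−n} |W| · |𝔼_{x∈y+W} f(x) e(−φ(x))|. -/

import Mathlib

open Finset

/-- The exponential map `e : ℝ/ℤ → ℂ`, `e(θ) = e^{2πiθ}`. -/
noncomputable def ee (θ : AddCircle (1 : ℝ)) : ℂ := (AddCircle.toCircle θ : ℂ)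

/-- The Gowers uniformity norm `‖f‖_{U^d(G)}` of a function `f : G → ℂ` on a finite
additive group `G`. -/
noncomputable def gowersNorm {G : Type*} [AddCommGroup G] [Fintype G] (d : ℕ) (f : G → ℂ) : ℝ :=
  ‖(((Fintype.card G : ℂ) ^ (d + 1))⁻¹ *
        ∑ x : G, ∑ h : Fin d → G, ∏ ω : Fin d → Bool,
          (((starRingEnd ℂ) : ℂ → ℂ)^[(univ.filter fun i => ω i = true).card]
            (f (x + ∑ i ∈ univ.filter (fun i => ω i = true), h i))))‖ ^
    (((2 : ℝ) ^ d)⁻¹)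

/-- The average `𝔼_{x ∈ B} f(x)` of `f : G → ℂ` over a subset `B` of a finite type `G`. -/
noncomputable def expectC {G : Type*} [Fintype G] (B : Set G) (f : G → ℂ) : ℂ :=
  (B.ncard : ℂ)⁻¹ * ∑ x ∈ B.toFinite.toFinset, f x

/-- `φ : G → ℝ/ℤ` is a locally quadratic phase function on `B ⊆ G`. -/
def IsQuadraticOn {G : Type*} [AddCommGroup G] (B : Set G) (φ : G → AddCircle (1 : ℝ)) : Prop :=
  ∀ x h₁ h₂ h₃ : G,
    (∀ ω₁ ω₂ ω₃ : Bool, x + (cond ω₁ h₁ 0) + (cond ω₂ h₂ 0) + (cond ω₃ h₃ 0) ∈ B) →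
    φ (x + h₁ + h₂ + h₃) - φ (x + h₁ + h₂) - φ (x + h₁ + h₃) - φ (x + h₂ + h₃)
      + φ (x + h₁) + φ (x + h₂) + φ (x + h₃) - φ x = 0

lemma ee_add (a b : AddCircle (1:ℝ)) : ee (a + b) = ee a * ee b := by
  simp [ee, AddCircle.toCircle_add]

lemma ee_abs (a : AddCircle (1:ℝ)) : ‖ee a‖ = 1 := Circle.norm_coe _

lemma ee_neg (a : AddCircle (1:ℝ)) : ee (-a) = (starRingEnd ℂ) (ee a) := by
  have h1 : AddCircle.toCircle (-a) * AddCircle.toCircle a = 1 := by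
    rw [← AddCircle.toCircle_add, neg_add_cancel, AddCircle.toCircle_zero]
  have h2 : AddCircle.toCircle (-a) = (AddCircle.toCircle a)⁻¹ := eq_inv_of_mul_eq_one_left h1
  rw [ee, ee, h2, Circle.coe_inv_eq_conj]


lemma cs_abs {ι : Type*} [Fintype ι] (a b : ι → ℂ) :
    (‖∑ j, a j * b j‖)^2 ≤ (∑ j, ‖a j‖^2) * (∑ j, ‖b j‖^2) := by
  have h1 : ‖∑ j, a j * b j‖ ≤ ∑ j, ‖a j‖ * ‖b j‖ := by
    refine (norm_sum_le _ _).trans ?_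
    simp [map_mul]
  calc (‖∑ j, a j * b j‖)^2 ≤ (∑ j, ‖a j‖ * ‖b j‖)^2 := by
        apply pow_le_pow_left₀ (norm_nonneg _) h1
    _ ≤ _ := sum_mul_sq_le_sq_mul_sq _ _ _


lemma sum_fn3 {G : Type*} [Fintype G] {M : Type*} [AddCommMonoid M] (F : (Fin 3 → G) → M) :
    ∑ h : Fin 3 → G, F h = ∑ a : G, ∑ b : G, ∑ c : G, F ![a, b, c] := by
  have h1 : ∑ p : G × G × G, F ![p.1, p.2.1, p.2.2] = ∑ h : Fin 3 → G, F h := by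
    apply Fintype.sum_bijective (fun p : G × G × G => (![p.1, p.2.1, p.2.2] : Fin 3 → G))
    · constructor
      · intro p q hpq
        have h0 := congrFun hpq 0
        have h1 := congrFun hpq 1
        have h2 := congrFun hpq 2
        simp only [Matrix.cons_val_zero, Matrix.cons_val_one, Matrix.head_cons,
          Matrix.cons_val_two, Matrix.tail_cons] at h0 h1 h2
        exact Prod.ext h0 (Prod.ext h1 h2)
      · intro h
        exact ⟨(h 0, h 1, h 2), by funext i; fin_cases i <;> simp⟩
    · intro p; rfl
  rw [← h1, Fintype.sum_prod_type]
  refine Finset.sum_congr rfl fun a _ => ?_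
  rw [Fintype.sum_prod_type]

lemma prod_fn3bool {M : Type*} [CommMonoid M] (F : (Fin 3 → Bool) → M) :
    ∏ ω : Fin 3 → Bool, F ω =
      F ![false, false, false] * F ![false, false, true] * F ![false, true, false] *
      F ![false, true, true] * F ![true, false, false] * F ![true, false, true] *
      F ![true, true, false] * F ![true, true, true] := by
  have h1 : ∏ p : Bool × Bool × Bool, F ![p.1, p.2.1, p.2.2] = ∏ ω : Fin 3 → Bool, F ω := by
    apply Fintype.prod_bijective (fun p : Bool × Bool × Bool => (![p.1, p.2.1, p.2.2] : Fin 3 → Bool))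
    · constructor
      · intro p q hpq
        have h0 := congrFun hpq 0
        have h1 := congrFun hpq 1
        have h2 := congrFun hpq 2
        simp only [Matrix.cons_val_zero, Matrix.cons_val_one, Matrix.head_cons,
          Matrix.cons_val_two, Matrix.tail_cons] at h0 h1 h2
        exact Prod.ext h0 (Prod.ext h1 h2)
      · intro h
        exact ⟨(h 0, h 1, h 2), by funext i; fin_cases i <;> simp⟩
    · intro p; rfl
  rw [← h1, Fintype.prod_prod_type]
  simp only [Fintype.prod_bool]
  rw [Fintype.prod_prod_type, Fintype.prod_prod_type]
  simp only [Fintype.prod_bool]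
  ac_rfl

lemma gowers_term {G : Type*} [AddCommGroup G] [Fintype G] (f : G → ℂ) (x h₁ h₂ h₃ : G) :
    (∏ ω : Fin 3 → Bool, (((starRingEnd ℂ) : ℂ → ℂ)^[(univ.filter fun i => ω i = true).card]
        (f (x + ∑ i ∈ univ.filter (fun i => ω i = true), (![h₁,h₂,h₃] : Fin 3 → G) i))))
    = f x * (starRingEnd ℂ) (f (x+h₃)) * (starRingEnd ℂ) (f (x+h₂)) * (f (x+h₂+h₃)) *
      (starRingEnd ℂ) (f (x+h₁)) * (f (x+h₁+h₃)) * (f (x+h₁+h₂)) *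
      (starRingEnd ℂ) (f (x+h₁+h₂+h₃)) := by
  rw [prod_fn3bool]
  have e0 : (univ.filter fun i : Fin 3 => ![false,false,false] i = true) = ∅ := by decide
  have e1 : (univ.filter fun i : Fin 3 => ![false,false,true] i = true) = {2} := by decide
  have e2 : (univ.filter fun i : Fin 3 => ![false,true,false] i = true) = {1} := by decide
  have e3 : (univ.filter fun i : Fin 3 => ![false,true,true] i = true) = {1,2} := by decide
  have e4 : (univ.filter fun i : Fin 3 => ![true,false,false] i = true) = {0} := by decide
  have e5 : (univ.filter fun i : Fin 3 => ![true,false,true] i = true) = {0,2} := by decide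
  have e6 : (univ.filter fun i : Fin 3 => ![true,true,false] i = true) = {0,1} := by decide
  have e7 : (univ.filter fun i : Fin 3 => ![true,true,true] i = true) = {0,1,2} := by decide
  rw [e0, e1, e2, e3, e4, e5, e6, e7]
  have s3 : ∑ i ∈ ({1,2} : Finset (Fin 3)), ![h₁,h₂,h₃] i = h₂ + h₃ := by
    rw [Finset.sum_pair (by decide)]; norm_num [Matrix.cons_val_two, Matrix.tail_cons, Matrix.head_cons]
  have s5 : ∑ i ∈ ({0,2} : Finset (Fin 3)), ![h₁,h₂,h₃] i = h₁ + h₃ := by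
    rw [Finset.sum_pair (by decide)]; norm_num [Matrix.cons_val_two, Matrix.tail_cons, Matrix.head_cons]
  have s7 : ∑ i ∈ ({0,1,2} : Finset (Fin 3)), ![h₁,h₂,h₃] i = h₁ + h₂ + h₃ := by
    rw [show ({0,1,2} : Finset (Fin 3)) = univ by decide, Fin.sum_univ_three]; norm_num [add_assoc, Matrix.cons_val_two, Matrix.tail_cons, Matrix.head_cons]
  have c3 : #({1,2} : Finset (Fin 3)) = 2 := by decide
  have c5 : #({0,2} : Finset (Fin 3)) = 2 := by decide
  have c7 : #({0,1,2} : Finset (Fin 3)) = 3 := by decide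
  rw [s3, s5, s7, c3, c5, c7]
  norm_num [Function.iterate_succ, ← add_assoc, Function.iterate_fixed, Matrix.cons_val_two, Matrix.tail_cons, Matrix.head_cons]


section swaps
variable {G M : Type*} [Fintype G] [AddCommMonoid M]

lemma sc12 (t : G → G → G → G → M) :
    ∑ a : G, ∑ b : G, ∑ x : G, ∑ c : G, t a b x c
      = ∑ b : G, ∑ a : G, ∑ x : G, ∑ c : G, t a b x c := Finset.sum_comm

lemma sc23 (t : G → G → G → G → M) :
    ∑ a : G, ∑ b : G, ∑ x : G, ∑ c : G, t a b x c
      = ∑ a : G, ∑ x : G, ∑ b : G, ∑ c : G, t a b x c :=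
  Finset.sum_congr rfl fun _ _ => Finset.sum_comm

lemma sc34 (t : G → G → G → G → M) :
    ∑ a : G, ∑ b : G, ∑ x : G, ∑ c : G, t a b x c
      = ∑ a : G, ∑ b : G, ∑ c : G, ∑ x : G, t a b x c :=
  Finset.sum_congr rfl fun _ _ => Finset.sum_congr rfl fun _ _ => Finset.sum_comm

-- (x h₁ h₂ h₃) → (h₂ h₃ x h₁)
lemma perm_front (t : G → G → G → G → M) :
    ∑ x : G, ∑ a : G, ∑ b : G, ∑ c : G, t x a b c
      = ∑ b : G, ∑ c : G, ∑ x : G, ∑ a : G, t x a b c := by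
  rw [sc23 (fun x a b c => t x a b c), sc34 (fun x b a c => t x a b c),
      sc12 (fun x b c a => t x a b c), sc23 (fun b x c a => t x a b c)]

-- (a b x c) → (c b x a)
lemma perm14 (t : G → G → G → G → M) :
    ∑ a : G, ∑ b : G, ∑ x : G, ∑ c : G, t a b x c
      = ∑ c : G, ∑ b : G, ∑ x : G, ∑ a : G, t a b x c := by
  rw [sc34 (fun a b x c => t a b x c), sc23 (fun a b c x => t a b x c),
      sc12 (fun a c b x => t a b x c), sc23 (fun c a b x => t a b x c),
      sc34 (fun c b a x => t a b x c)]

-- (a b x c) → (a c x b)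
lemma perm24 (t : G → G → G → G → M) :
    ∑ a : G, ∑ b : G, ∑ x : G, ∑ c : G, t a b x c
      = ∑ a : G, ∑ c : G, ∑ x : G, ∑ b : G, t a b x c := by
  rw [sc34 (fun a b x c => t a b x c), sc23 (fun a b c x => t a b x c),
      sc34 (fun a c b x => t a b x c)]

-- (a b x c) → (x a b c)
lemma perm_back (t : G → G → G → G → M) :
    ∑ a : G, ∑ b : G, ∑ x : G, ∑ c : G, t a b x c
      = ∑ x : G, ∑ a : G, ∑ b : G, ∑ c : G, t a b x c := by
  rw [sc23 (fun a b x c => t a b x c), sc12 (fun a x b c => t a b x c)]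

end swaps

section regroup
variable {G : Type*} [AddCommGroup G] [Fintype G]

lemma shift_sum {M : Type*} [AddCommMonoid M] (x : G) (F : G → M) :
    ∑ h : G, F (x + h) = ∑ v : G, F v :=
  Fintype.sum_equiv (Equiv.addLeft x) _ _ (fun _ => rfl)

lemma regroup (A Bb : G → G → G → ℂ) :
    (∑ a : G, ∑ b : G, ∑ x : G, ∑ k : G, A x a b * Bb (x + k) a b)
      = ∑ a : G, ∑ b : G, (∑ x : G, A x a b) * (∑ v : G, Bb v a b) := by
  refine Finset.sum_congr rfl fun a _ => Finset.sum_congr rfl fun b _ => ?_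
  rw [Finset.sum_mul]
  refine Finset.sum_congr rfl fun x _ => ?_
  rw [← Finset.mul_sum, shift_sum x (fun v => Bb v a b)]

lemma sq_abs_sum_expand (A : G → ℂ) :
    (((‖∑ u : G, A u‖)^2 : ℝ) : ℂ) = ∑ x : G, ∑ h : G, A (x + h) * (starRingEnd ℂ) (A x) := by
  rw [Complex.sq_norm, ← Complex.mul_conj, map_sum, Finset.sum_mul_sum]
  rw [Finset.sum_comm]
  refine Finset.sum_congr rfl fun x _ => ?_
  rw [← shift_sum x (fun u => A u * (starRingEnd ℂ) (A x))]

end regroup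

section core
set_option linter.unusedSectionVars false
attribute [local instance] Classical.propDecidable
variable {G : Type*} [AddCommGroup G] [Fintype G]

noncomputable def Gg (B : Set G) (φ : G → AddCircle (1:ℝ)) : G → ℂ :=
  fun z => if z ∈ B then ee (φ z) else 0

noncomputable def cG (B : Set G) (φ : G → AddCircle (1:ℝ)) : G → ℂ :=
  fun z => (starRingEnd ℂ) (Gg B φ z)

variable (B : Set G) (φ : G → AddCircle (1:ℝ))

lemma Gg_abs (z : G) : ‖Gg B φ z‖ = if z ∈ B then 1 else 0 := by
  unfold Gg; split_ifs with h <;> simp [ee_abs]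

lemma cG_abs (z : G) : ‖cG B φ z‖ = if z ∈ B then 1 else 0 := by
  rw [cG, Complex.norm_conj, Gg_abs]

lemma Gg_pos {z : G} (h : z ∈ B) : Gg B φ z = ee (φ z) := by
  unfold Gg; rw [if_pos h]

lemma Gg_neg' {z : G} (h : z ∉ B) : Gg B φ z = 0 := by
  unfold Gg; rw [if_neg h]

lemma cG_pos {z : G} (h : z ∈ B) : cG B φ z = ee (-(φ z)) := by
  rw [cG, Gg_pos B φ h, ee_neg]

lemma cG_neg' {z : G} (h : z ∉ B) : cG B φ z = 0 := by
  rw [cG, Gg_neg' B φ h, map_zero]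

lemma conj_cG (z : G) : (starRingEnd ℂ) (cG B φ z) = Gg B φ z := by
  rw [cG, Complex.conj_conj]

lemma conj_Gg (z : G) : (starRingEnd ℂ) (Gg B φ z) = cG B φ z := rfl

end core

section main
set_option linter.unusedSectionVars false
attribute [local instance] Classical.propDecidable
variable {G : Type*} [AddCommGroup G] [Fintype G]
variable {B : Set G} {Wt : Set G} (φ : G → AddCircle (1:ℝ)) (f : G → ℂ)
lemma pointwise_eval
    (hadd : ∀ a w : G, a ∈ B → w ∈ Wt → a + w ∈ B)
    (hsubB : ∀ a w : G, a ∈ B → w ∈ Wt → a - w ∈ B)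
    (hsub : ∀ a b : G, a ∈ B → b ∈ B → b - a ∈ Wt)
    (hφ : IsQuadraticOn B φ) (x h₁ h₂ h₃ : G) :
    f x * cG B φ (x+h₁) * cG B φ (x+h₂) * cG B φ (x+h₃) * Gg B φ (x+h₁+h₂) *
      Gg B φ (x+h₁+h₃) * Gg B φ (x+h₂+h₃) * cG B φ (x+h₁+h₂+h₃)
    = (if x ∈ B then f x * ee (-(φ x)) else 0) * (if h₁ ∈ Wt then 1 else 0) *
      (if h₂ ∈ Wt then 1 else 0) * (if h₃ ∈ Wt then 1 else 0) := by
  by_cases hc : x ∈ B ∧ h₁ ∈ Wt ∧ h₂ ∈ Wt ∧ h₃ ∈ Wt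
  · obtain ⟨hx, hw1, hw2, hw3⟩ := hc
    have m1 : x + h₁ ∈ B := hadd _ _ hx hw1
    have m2 : x + h₂ ∈ B := hadd _ _ hx hw2
    have m3 : x + h₃ ∈ B := hadd _ _ hx hw3
    have m12 : x + h₁ + h₂ ∈ B := hadd _ _ m1 hw2
    have m13 : x + h₁ + h₃ ∈ B := hadd _ _ m1 hw3
    have m23 : x + h₂ + h₃ ∈ B := hadd _ _ m2 hw3
    have m123 : x + h₁ + h₂ + h₃ ∈ B := hadd _ _ m12 hw3
    have hq := hφ x h₁ h₂ h₃ (by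
      intro ω₁ ω₂ ω₃
      cases ω₁ <;> cases ω₂ <;> cases ω₃ <;>
        simp only [Bool.cond_false, Bool.cond_true, add_zero] <;> assumption)
    have key : (-(φ (x+h₁))) + (-(φ (x+h₂))) + (-(φ (x+h₃))) + φ (x+h₁+h₂) + φ (x+h₁+h₃)
        + φ (x+h₂+h₃) + (-(φ (x+h₁+h₂+h₃))) = -(φ x) := by
      have h5 : (-(φ (x+h₁))) + (-(φ (x+h₂))) + (-(φ (x+h₃))) + φ (x+h₁+h₂) + φ (x+h₁+h₃)
          + φ (x+h₂+h₃) + (-(φ (x+h₁+h₂+h₃))) + φ x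
          = -(φ (x + h₁ + h₂ + h₃) - φ (x + h₁ + h₂) - φ (x + h₁ + h₃) - φ (x + h₂ + h₃)
            + φ (x + h₁) + φ (x + h₂) + φ (x + h₃) - φ x) := by abel
      rw [hq, neg_zero] at h5
      exact eq_neg_of_add_eq_zero_left h5
    rw [cG_pos B φ m1, cG_pos B φ m2, cG_pos B φ m3, Gg_pos B φ m12, Gg_pos B φ m13,
      Gg_pos B φ m23, cG_pos B φ m123, if_pos hx, if_pos hw1, if_pos hw2, if_pos hw3]
    rw [mul_one, mul_one, mul_one, ← key]
    simp only [ee_add]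
    ring
  · have hz : (if x ∈ B then f x * ee (-(φ x)) else 0) * (if h₁ ∈ Wt then (1:ℂ) else 0) *
        (if h₂ ∈ Wt then (1:ℂ) else 0) * (if h₃ ∈ Wt then (1:ℂ) else 0) = 0 := by
      by_cases hx : x ∈ B
      · by_cases hw1 : h₁ ∈ Wt
        · by_cases hw2 : h₂ ∈ Wt
          · by_cases hw3 : h₃ ∈ Wt
            · exact absurd ⟨hx, hw1, hw2, hw3⟩ hc
            · simp [hw3]
          · simp [hw2]
        · simp [hw1]
      · simp [hx]
    rw [hz]
    by_cases m1 : x + h₁ ∈ B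
    · by_cases m2 : x + h₂ ∈ B
      · by_cases m12 : x + h₁ + h₂ ∈ B
        · by_cases m13 : x + h₁ + h₃ ∈ B
          · -- derive all memberships, contradiction
            exfalso
            have hw2 : h₂ ∈ Wt := by
              have := hsub _ _ m1 m12
              simpa using this
            have hw1 : h₁ ∈ Wt := by
              have := hsub _ _ m2 m12
              have e : x + h₁ + h₂ - (x + h₂) = h₁ := by abel
              rwa [e] at this
            have hw3 : h₃ ∈ Wt := by
              have := hsub _ _ m1 m13
              have e : x + h₁ + h₃ - (x + h₁) = h₃ := by abel
              rwa [e] at this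
            have hx : x ∈ B := by
              have := hsubB _ _ m1 hw1
              have e : x + h₁ - h₁ = x := by abel
              rwa [e] at this
            exact hc ⟨hx, hw1, hw2, hw3⟩
          · rw [Gg_neg' B φ m13]; ring
        · rw [Gg_neg' B φ m12]; ring
      · rw [cG_neg' B φ m2]; ring
    · rw [cG_neg' B φ m1]; ring

lemma pg_generic
    (hsub : ∀ a b : G, a ∈ B → b ∈ B → b - a ∈ Wt)
    (a b : G) (F : G → ℂ) (M : ℕ)
    (hM : (B.toFinite.toFinset.card : ℝ) = M)
    (hF : ∀ v, ‖F v‖ = (if v ∈ B then (1:ℝ) else 0) * (if v+a ∈ B then (1:ℝ) else 0)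
      * (if v+b ∈ B then (1:ℝ) else 0) * (if v+a+b ∈ B then (1:ℝ) else 0)) :
    ‖∑ v : G, F v‖ ≤ (if a ∈ Wt ∧ b ∈ Wt then (M:ℝ) else 0) := by
  refine (norm_sum_le _ _).trans ?_
  by_cases hab : a ∈ Wt ∧ b ∈ Wt
  · rw [if_pos hab]
    calc ∑ v : G, ‖F v‖ ≤ ∑ v : G, (if v ∈ B then (1:ℝ) else 0) := by
          refine Finset.sum_le_sum fun v _ => ?_
          rw [hF v]
          by_cases hv : v ∈ B
          · rw [if_pos hv]
            by_cases h2 : v + a ∈ B <;> by_cases h3 : v + b ∈ B <;>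
              by_cases h4 : v + a + b ∈ B <;> simp [h2, h3, h4]
          · simp [hv]
      _ = (M:ℝ) := by
          rw [← hM, Finset.sum_boole]
          congr 1
          congr 1
          ext x
          simp only [Finset.mem_filter, Finset.mem_univ, true_and, Set.Finite.mem_toFinset]
  · rw [if_neg hab]
    have : ∀ v : G, ‖F v‖ = 0 := by
      intro v
      rw [hF v]
      by_cases hv : v ∈ B
      · by_cases h2 : v + a ∈ B
        · by_cases h3 : v + b ∈ B
          · exfalso
            apply hab
            constructor
            · have := hsub _ _ hv h2; simpa using this
            · have := hsub _ _ hv h3; simpa using this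
          · simp [h3]
        · simp [h2]
      · simp [hv]
    simp [this]

variable (B) (f : G → ℂ)

noncomputable def A1 (u a b : G) : ℂ := f u * cG B φ (u+a) * cG B φ (u+b) * Gg B φ (u+a+b)
noncomputable def B1 (v a b : G) : ℂ := cG B φ v * Gg B φ (v+a) * Gg B φ (v+b) * cG B φ (v+a+b)
noncomputable def A2 (x a b : G) : ℂ :=
  f (x+a) * (starRingEnd ℂ) (f x) * cG B φ (x+a+b) * Gg B φ (x+b)
noncomputable def B2 (q a b : G) : ℂ := cG B φ (q+a) * Gg B φ (q+a+b) * Gg B φ q * cG B φ (q+b)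
noncomputable def A3 (x a b : G) : ℂ :=
  f (x+a+b) * (starRingEnd ℂ) (f (x+b)) * (starRingEnd ℂ) (f (x+a)) * f x
noncomputable def B3 (s a b : G) : ℂ := cG B φ (s+a+b) * Gg B φ (s+b) * Gg B φ (s+a) * cG B φ s

noncomputable def gtF (x h₁ h₂ h₃ : G) : ℂ :=
  f x * (starRingEnd ℂ) (f (x+h₃)) * (starRingEnd ℂ) (f (x+h₂)) * f (x+h₂+h₃) *
  (starRingEnd ℂ) (f (x+h₁)) * f (x+h₁+h₃) * f (x+h₁+h₂) * (starRingEnd ℂ) (f (x+h₁+h₂+h₃))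

lemma fac1 (x h₁ h₂ h₃ : G) :
    f x * cG B φ (x+h₁) * cG B φ (x+h₂) * cG B φ (x+h₃) * Gg B φ (x+h₁+h₂) *
      Gg B φ (x+h₁+h₃) * Gg B φ (x+h₂+h₃) * cG B φ (x+h₁+h₂+h₃)
    = A1 B φ f x h₂ h₃ * B1 B φ (x+h₁) h₂ h₃ := by
  simp only [A1, B1]
  ring

lemma fac2 (x h₁ h₂ h₃ : G) :
    A1 B φ f (x+h₁) h₂ h₃ * (starRingEnd ℂ) (A1 B φ f x h₂ h₃)
    = A2 B φ f x h₁ h₃ * B2 B φ (x+h₂) h₁ h₃ := by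
  simp only [A1, A2, B2, map_mul, conj_cG, conj_Gg]
  abel_nf
  ring

lemma fac3 (x h₁ h₂ h₃ : G) :
    A2 B φ f (x+h₂) h₁ h₃ * (starRingEnd ℂ) (A2 B φ f x h₁ h₃)
    = A3 f x h₁ h₂ * B3 B φ (x+h₃) h₁ h₂ := by
  simp only [A2, A3, B3, map_mul, conj_cG, conj_Gg, Complex.conj_conj]
  abel_nf
  ring

set_option maxHeartbeats 1000000 in
lemma fac4 (x h₁ h₂ h₃ : G) :
    A3 f (x+h₃) h₁ h₂ * (starRingEnd ℂ) (A3 f x h₁ h₂)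
    = (starRingEnd ℂ) (gtF f x h₁ h₂ h₃) := by
  simp only [A3, gtF, map_mul, Complex.conj_conj]
  abel_nf
  ring

lemma pgB1 (hsub : ∀ a b : G, a ∈ B → b ∈ B → b - a ∈ Wt) (M : ℕ)
    (hM : (B.toFinite.toFinset.card : ℝ) = M) (a b : G) :
    ‖∑ v : G, B1 B φ v a b‖ ≤ (if a ∈ Wt ∧ b ∈ Wt then (M:ℝ) else 0) := by
  refine pg_generic (B := B) hsub a b _ M hM fun v => ?_
  simp only [B1, norm_mul, Gg_abs, cG_abs]

lemma pgB2 (hsub : ∀ a b : G, a ∈ B → b ∈ B → b - a ∈ Wt) (M : ℕ)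
    (hM : (B.toFinite.toFinset.card : ℝ) = M) (a b : G) :
    ‖∑ v : G, B2 B φ v a b‖ ≤ (if a ∈ Wt ∧ b ∈ Wt then (M:ℝ) else 0) := by
  refine pg_generic (B := B) hsub a b _ M hM fun v => ?_
  simp only [B2, norm_mul, Gg_abs, cG_abs]
  ring

lemma pgB3 (hsub : ∀ a b : G, a ∈ B → b ∈ B → b - a ∈ Wt) (M : ℕ)
    (hM : (B.toFinite.toFinset.card : ℝ) = M) (a b : G) :
    ‖∑ v : G, B3 B φ v a b‖ ≤ (if a ∈ Wt ∧ b ∈ Wt then (M:ℝ) else 0) := by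
  refine pg_generic (B := B) hsub a b _ M hM fun v => ?_
  simp only [B3, norm_mul, Gg_abs, cG_abs]
  ring

end main


-- MASTER AND MAIN TO COME
section masterSec
set_option linter.unusedSectionVars false
attribute [local instance] Classical.propDecidable
variable {G : Type*} [AddCommGroup G] [Fintype G]
variable (B Wt : Set G) (φ : G → AddCircle (1:ℝ)) (f : G → ℂ) (M : ℕ)

lemma ind_sum_c (hWcard : Wt.toFinite.toFinset.card = M) :
    ∑ h : G, (if h ∈ Wt then (1:ℂ) else 0) = (M:ℂ) := by
  rw [Finset.sum_boole, ← hWcard]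
  congr 2
  ext x
  simp only [Finset.mem_filter, Finset.mem_univ, true_and, Set.Finite.mem_toFinset]

lemma ind_sum_r (hWcard : Wt.toFinite.toFinset.card = M) :
    ∑ h : G, (if h ∈ Wt then (1:ℝ) else 0) = (M:ℝ) := by
  rw [Finset.sum_boole, ← hWcard]
  congr 2
  ext x
  simp only [Finset.mem_filter, Finset.mem_univ, true_and, Set.Finite.mem_toFinset]

lemma ind_sum_B (v : G → ℂ) :
    ∑ x : G, (if x ∈ B then v x else 0) = ∑ x ∈ B.toFinite.toFinset, v x := by
  rw [← Finset.sum_filter]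
  congr 1
  ext x
  simp only [Finset.mem_filter, Finset.mem_univ, true_and, Set.Finite.mem_toFinset]

lemma sum4_factor (p q r s : G → ℂ) :
    ∑ x : G, ∑ a : G, ∑ b : G, ∑ c : G, p x * q a * r b * s c
      = (∑ x : G, p x) * (∑ a : G, q a) * (∑ b : G, r b) * (∑ c : G, s c) := by
  calc ∑ x : G, ∑ a : G, ∑ b : G, ∑ c : G, p x * q a * r b * s c
      = ∑ x : G, ∑ a : G, ∑ b : G, (p x * q a * r b) * (∑ c : G, s c) := by
        refine Finset.sum_congr rfl fun x _ => Finset.sum_congr rfl fun a _ =>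
          Finset.sum_congr rfl fun b _ => ?_
        rw [← Finset.mul_sum]
    _ = ∑ x : G, ∑ a : G, ((p x * q a * (∑ b : G, r b)) * (∑ c : G, s c)) := by
        refine Finset.sum_congr rfl fun x _ => Finset.sum_congr rfl fun a _ => ?_
        rw [← Finset.sum_mul, ← Finset.mul_sum]
    _ = ∑ x : G, ((p x * (∑ a : G, q a) * (∑ b : G, r b)) * (∑ c : G, s c)) := by
        refine Finset.sum_congr rfl fun x _ => ?_
        rw [← Finset.sum_mul, ← Finset.sum_mul, ← Finset.mul_sum]
    _ = (∑ x : G, p x) * (∑ a : G, q a) * (∑ b : G, r b) * (∑ c : G, s c) := by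
        rw [← Finset.sum_mul, ← Finset.sum_mul, ← Finset.sum_mul]

lemma Psum (hWcard : Wt.toFinite.toFinset.card = M) (F : G → G → G → ℂ)
    (hpg : ∀ a b : G, ‖∑ v : G, F v a b‖ ≤ if a ∈ Wt ∧ b ∈ Wt then (M:ℝ) else 0) :
    ∑ p : G × G, (‖∑ v : G, F v p.1 p.2‖)^2 ≤ (M:ℝ)^4 := by
  have step : ∀ p : G × G, (‖∑ v : G, F v p.1 p.2‖)^2
      ≤ (if p.1 ∈ Wt then (1:ℝ) else 0) * (if p.2 ∈ Wt then (1:ℝ) else 0) * (M:ℝ)^2 := by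
    intro p
    have h1 := hpg p.1 p.2
    have h2 : (‖∑ v : G, F v p.1 p.2‖)^2 ≤ (if p.1 ∈ Wt ∧ p.2 ∈ Wt then (M:ℝ) else 0)^2 :=
      pow_le_pow_left₀ (norm_nonneg _) h1 2
    refine h2.trans_eq ?_
    by_cases ha : p.1 ∈ Wt <;> by_cases hb : p.2 ∈ Wt <;> simp [ha, hb]
  calc ∑ p : G × G, (‖∑ v : G, F v p.1 p.2‖)^2
      ≤ ∑ p : G × G, (if p.1 ∈ Wt then (1:ℝ) else 0) * (if p.2 ∈ Wt then (1:ℝ) else 0) * (M:ℝ)^2 :=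
        Finset.sum_le_sum fun p _ => step p
    _ = ((∑ a : G, if a ∈ Wt then (1:ℝ) else 0) * (∑ b : G, if b ∈ Wt then (1:ℝ) else 0)) * (M:ℝ)^2 := by
        rw [Finset.sum_mul_sum, Finset.sum_mul, Fintype.sum_prod_type]
        exact Finset.sum_congr rfl fun a _ => by rw [Finset.sum_mul]
    _ = (M:ℝ)^4 := by rw [ind_sum_r Wt M hWcard]; ring

lemma sq_abs_sum_expand' (A : G → ℂ) :
    ((‖∑ u : G, A u‖ : ℂ))^2 = ∑ x : G, ∑ h : G, A (x + h) * (starRingEnd ℂ) (A x) := by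
  rw [← Complex.ofReal_pow]
  exact sq_abs_sum_expand A

set_option maxHeartbeats 2000000 in
theorem master
    (hadd : ∀ a w : G, a ∈ B → w ∈ Wt → a + w ∈ B)
    (hsubB : ∀ a w : G, a ∈ B → w ∈ Wt → a - w ∈ B)
    (hsub : ∀ a b : G, a ∈ B → b ∈ B → b - a ∈ Wt)
    (hφ : IsQuadraticOn B φ)
    (hBcard : B.toFinite.toFinset.card = M)
    (hWcard : Wt.toFinite.toFinset.card = M)
    (hMpos : 0 < M) :
    ‖∑ x ∈ B.toFinite.toFinset, f x * ee (-(φ x))‖ ^ 8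
      ≤ (M:ℝ)^4 * ‖∑ x : G, ∑ h₁ : G, ∑ h₂ : G, ∑ h₃ : G, gtF f x h₁ h₂ h₃‖ := by
  have hMc : ((B.toFinite.toFinset.card : ℕ) : ℝ) = (M:ℝ) := by exact_mod_cast hBcard
  set D : ℂ := ∑ x ∈ B.toFinite.toFinset, f x * ee (-(φ x)) with hD
  set Sg : ℂ := ∑ x : G, ∑ h₁ : G, ∑ h₂ : G, ∑ h₃ : G, gtF f x h₁ h₂ h₃ with hSg
  set S : ℂ := ∑ x : G, ∑ h₁ : G, ∑ h₂ : G, ∑ h₃ : G,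
      f x * cG B φ (x+h₁) * cG B φ (x+h₂) * cG B φ (x+h₃) * Gg B φ (x+h₁+h₂) *
      Gg B φ (x+h₁+h₃) * Gg B φ (x+h₂+h₃) * cG B φ (x+h₁+h₂+h₃) with hS
  -- Step 1 : S = D * M^3
  have step1 : S = D * (M:ℂ) * (M:ℂ) * (M:ℂ) := by
    rw [hS]
    calc (∑ x : G, ∑ h₁ : G, ∑ h₂ : G, ∑ h₃ : G,
        f x * cG B φ (x+h₁) * cG B φ (x+h₂) * cG B φ (x+h₃) * Gg B φ (x+h₁+h₂) *
        Gg B φ (x+h₁+h₃) * Gg B φ (x+h₂+h₃) * cG B φ (x+h₁+h₂+h₃))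
        = ∑ x : G, ∑ h₁ : G, ∑ h₂ : G, ∑ h₃ : G,
          (if x ∈ B then f x * ee (-(φ x)) else 0) * (if h₁ ∈ Wt then 1 else 0) *
          (if h₂ ∈ Wt then 1 else 0) * (if h₃ ∈ Wt then 1 else 0) := by
          refine Finset.sum_congr rfl fun x _ => Finset.sum_congr rfl fun h₁ _ =>
            Finset.sum_congr rfl fun h₂ _ => Finset.sum_congr rfl fun h₃ _ => ?_
          exact pointwise_eval φ f hadd hsubB hsub hφ x h₁ h₂ h₃
      _ = (∑ x : G, if x ∈ B then f x * ee (-(φ x)) else 0) *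
          (∑ h : G, if h ∈ Wt then (1:ℂ) else 0) * (∑ h : G, if h ∈ Wt then (1:ℂ) else 0) *
          (∑ h : G, if h ∈ Wt then (1:ℂ) else 0) := sum4_factor _ _ _ _
      _ = D * (M:ℂ) * (M:ℂ) * (M:ℂ) := by
          rw [ind_sum_B B, ind_sum_c Wt M hWcard, hD]
  -- Step 2 : S in bilinear form
  have step2 : S = ∑ p : G × G, (∑ u : G, A1 B φ f u p.1 p.2) * (∑ v : G, B1 B φ v p.1 p.2) := by
    rw [hS]
    calc (∑ x : G, ∑ h₁ : G, ∑ h₂ : G, ∑ h₃ : G,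
        f x * cG B φ (x+h₁) * cG B φ (x+h₂) * cG B φ (x+h₃) * Gg B φ (x+h₁+h₂) *
        Gg B φ (x+h₁+h₃) * Gg B φ (x+h₂+h₃) * cG B φ (x+h₁+h₂+h₃))
        = ∑ x : G, ∑ h₁ : G, ∑ h₂ : G, ∑ h₃ : G, A1 B φ f x h₂ h₃ * B1 B φ (x+h₁) h₂ h₃ := by
          refine Finset.sum_congr rfl fun x _ => Finset.sum_congr rfl fun h₁ _ =>
            Finset.sum_congr rfl fun h₂ _ => Finset.sum_congr rfl fun h₃ _ => ?_
          exact fac1 B φ f x h₁ h₂ h₃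
      _ = ∑ h₂ : G, ∑ h₃ : G, ∑ x : G, ∑ h₁ : G, A1 B φ f x h₂ h₃ * B1 B φ (x+h₁) h₂ h₃ :=
          perm_front (fun x h₁ h₂ h₃ => A1 B φ f x h₂ h₃ * B1 B φ (x+h₁) h₂ h₃)
      _ = ∑ h₂ : G, ∑ h₃ : G, (∑ u : G, A1 B φ f u h₂ h₃) * (∑ v : G, B1 B φ v h₂ h₃) :=
          regroup (fun x a b => A1 B φ f x a b) (fun v a b => B1 B φ v a b)
      _ = ∑ p : G × G, (∑ u : G, A1 B φ f u p.1 p.2) * (∑ v : G, B1 B φ v p.1 p.2) := by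
          rw [Fintype.sum_prod_type]
  set T1 : ℝ := ∑ p : G × G, (‖∑ u : G, A1 B φ f u p.1 p.2‖)^2 with hT1
  set T2 : ℝ := ∑ p : G × G, (‖∑ u : G, A2 B φ f u p.1 p.2‖)^2 with hT2
  set T3 : ℝ := ∑ p : G × G, (‖∑ u : G, A3 f u p.1 p.2‖)^2 with hT3
  have hT1nn : 0 ≤ T1 := Finset.sum_nonneg fun p _ => sq_nonneg _
  have hT2nn : 0 ≤ T2 := Finset.sum_nonneg fun p _ => sq_nonneg _
  have hT3nn : 0 ≤ T3 := Finset.sum_nonneg fun p _ => sq_nonneg _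
  have hm4nn : (0:ℝ) ≤ (M:ℝ)^4 := by positivity
  -- CS step 1
  have cs1 : (‖S‖)^2 ≤ T1 * (M:ℝ)^4 := by
    rw [step2]
    refine le_trans (cs_abs _ _) ?_
    refine mul_le_mul_of_nonneg_left ?_ hT1nn
    exact Psum Wt M hWcard (fun v a b => B1 B φ v a b) (pgB1 B φ hsub M hMc)
  -- T1 cast identity
  have castT1 : ((T1 : ℝ) : ℂ) = ∑ p : G × G, (∑ x : G, A2 B φ f x p.1 p.2) * (∑ q : G, B2 B φ q p.1 p.2) := by
    rw [hT1]
    push_cast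
    calc (∑ p : G × G, ((‖∑ u : G, A1 B φ f u p.1 p.2‖ : ℂ))^2)
        = ∑ p : G × G, ∑ x : G, ∑ h : G, A1 B φ f (x + h) p.1 p.2 * (starRingEnd ℂ) (A1 B φ f x p.1 p.2) := by
          refine Finset.sum_congr rfl fun p _ => ?_
          exact sq_abs_sum_expand' (fun u => A1 B φ f u p.1 p.2)
      _ = ∑ h₂ : G, ∑ h₃ : G, ∑ x : G, ∑ h₁ : G, A2 B φ f x h₁ h₃ * B2 B φ (x + h₂) h₁ h₃ := by
          rw [Fintype.sum_prod_type]
          refine Finset.sum_congr rfl fun h₂ _ => Finset.sum_congr rfl fun h₃ _ =>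
            Finset.sum_congr rfl fun x _ => Finset.sum_congr rfl fun h₁ _ => ?_
          exact fac2 B φ f x h₁ h₂ h₃
      _ = ∑ h₁ : G, ∑ h₃ : G, ∑ x : G, ∑ h₂ : G, A2 B φ f x h₁ h₃ * B2 B φ (x + h₂) h₁ h₃ :=
          perm14 (fun h₂ h₃ x h₁ => A2 B φ f x h₁ h₃ * B2 B φ (x + h₂) h₁ h₃)
      _ = ∑ h₁ : G, ∑ h₃ : G, (∑ x : G, A2 B φ f x h₁ h₃) * (∑ q : G, B2 B φ q h₁ h₃) :=
          regroup (fun x a b => A2 B φ f x a b) (fun q a b => B2 B φ q a b)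
      _ = ∑ p : G × G, (∑ x : G, A2 B φ f x p.1 p.2) * (∑ q : G, B2 B φ q p.1 p.2) := by
          rw [Fintype.sum_prod_type]
  have cs2 : T1^2 ≤ T2 * (M:ℝ)^4 := by
    have habs : T1 = ‖((T1 : ℝ) : ℂ)‖ := by
      rw [Complex.norm_real, Real.norm_eq_abs, abs_of_nonneg hT1nn]
    rw [habs, castT1]
    refine le_trans (cs_abs _ _) ?_
    refine mul_le_mul_of_nonneg_left ?_ hT2nn
    exact Psum Wt M hWcard (fun v a b => B2 B φ v a b) (pgB2 B φ hsub M hMc)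
  have castT2 : ((T2 : ℝ) : ℂ) = ∑ p : G × G, (∑ x : G, A3 f x p.1 p.2) * (∑ s : G, B3 B φ s p.1 p.2) := by
    rw [hT2]
    push_cast
    calc (∑ p : G × G, ((‖∑ u : G, A2 B φ f u p.1 p.2‖ : ℂ))^2)
        = ∑ p : G × G, ∑ x : G, ∑ h : G, A2 B φ f (x + h) p.1 p.2 * (starRingEnd ℂ) (A2 B φ f x p.1 p.2) := by
          refine Finset.sum_congr rfl fun p _ => ?_
          exact sq_abs_sum_expand' (fun u => A2 B φ f u p.1 p.2)
      _ = ∑ h₁ : G, ∑ h₃ : G, ∑ x : G, ∑ h₂ : G, A3 f x h₁ h₂ * B3 B φ (x + h₃) h₁ h₂ := by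
          rw [Fintype.sum_prod_type]
          refine Finset.sum_congr rfl fun h₁ _ => Finset.sum_congr rfl fun h₃ _ =>
            Finset.sum_congr rfl fun x _ => Finset.sum_congr rfl fun h₂ _ => ?_
          exact fac3 B φ f x h₁ h₂ h₃
      _ = ∑ h₁ : G, ∑ h₂ : G, ∑ x : G, ∑ h₃ : G, A3 f x h₁ h₂ * B3 B φ (x + h₃) h₁ h₂ :=
          perm24 (fun h₁ h₃ x h₂ => A3 f x h₁ h₂ * B3 B φ (x + h₃) h₁ h₂)
      _ = ∑ h₁ : G, ∑ h₂ : G, (∑ x : G, A3 f x h₁ h₂) * (∑ s : G, B3 B φ s h₁ h₂) :=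
          regroup (fun x a b => A3 f x a b) (fun q a b => B3 B φ q a b)
      _ = ∑ p : G × G, (∑ x : G, A3 f x p.1 p.2) * (∑ s : G, B3 B φ s p.1 p.2) := by
          rw [Fintype.sum_prod_type]
  have cs3 : T2^2 ≤ T3 * (M:ℝ)^4 := by
    have habs : T2 = ‖((T2 : ℝ) : ℂ)‖ := by
      rw [Complex.norm_real, Real.norm_eq_abs, abs_of_nonneg hT2nn]
    rw [habs, castT2]
    refine le_trans (cs_abs _ _) ?_
    refine mul_le_mul_of_nonneg_left ?_ hT3nn
    exact Psum Wt M hWcard (fun v a b => B3 B φ v a b) (pgB3 B φ hsub M hMc)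
  have castT3 : ((T3 : ℝ) : ℂ) = (starRingEnd ℂ) Sg := by
    rw [hT3]
    push_cast
    calc (∑ p : G × G, ((‖∑ u : G, A3 f u p.1 p.2‖ : ℂ))^2)
        = ∑ p : G × G, ∑ x : G, ∑ h : G, A3 f (x + h) p.1 p.2 * (starRingEnd ℂ) (A3 f x p.1 p.2) := by
          refine Finset.sum_congr rfl fun p _ => ?_
          exact sq_abs_sum_expand' (fun u => A3 f u p.1 p.2)
      _ = ∑ h₁ : G, ∑ h₂ : G, ∑ x : G, ∑ h₃ : G, (starRingEnd ℂ) (gtF f x h₁ h₂ h₃) := by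
          rw [Fintype.sum_prod_type]
          refine Finset.sum_congr rfl fun h₁ _ => Finset.sum_congr rfl fun h₂ _ =>
            Finset.sum_congr rfl fun x _ => Finset.sum_congr rfl fun h₃ _ => ?_
          exact fac4 f x h₁ h₂ h₃
      _ = ∑ x : G, ∑ h₁ : G, ∑ h₂ : G, ∑ h₃ : G, (starRingEnd ℂ) (gtF f x h₁ h₂ h₃) :=
          perm_back (fun h₁ h₂ x h₃ => (starRingEnd ℂ) (gtF f x h₁ h₂ h₃))
      _ = (starRingEnd ℂ) Sg := by
          rw [hSg, map_sum]
          refine Finset.sum_congr rfl fun x _ => ?_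
          rw [map_sum]
          refine Finset.sum_congr rfl fun h₁ _ => ?_
          rw [map_sum]
          refine Finset.sum_congr rfl fun h₂ _ => ?_
          rw [map_sum]
  have hT3J : T3 = ‖Sg‖ := by
    have : T3 = ‖((T3 : ℝ) : ℂ)‖ := by
      rw [Complex.norm_real, Real.norm_eq_abs, abs_of_nonneg hT3nn]
    rw [this, castT3, Complex.norm_conj]
  -- final numeric chain
  set d : ℝ := ‖D‖ with hd
  set J : ℝ := ‖Sg‖ with hJ
  set m : ℝ := (M:ℝ) with hm
  have hmpos : (0:ℝ) < m := by
    rw [hm]; exact_mod_cast hMpos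
  have habsS : ‖S‖ = d * m^3 := by
    rw [step1, norm_mul, norm_mul, norm_mul, Complex.norm_natCast, ← hd]
    ring
  have hJnn : 0 ≤ J := norm_nonneg _
  have e1 : (‖S‖)^8 ≤ (T1 * m^4)^4 := by
    calc (‖S‖)^8 = ((‖S‖)^2)^4 := by ring
      _ ≤ (T1 * m^4)^4 := pow_le_pow_left₀ (sq_nonneg _) cs1 4
  have e2 : (T1 * m^4)^4 = (T1^2)^2 * m^16 := by ring
  have e3 : (T1^2)^2 ≤ (T2 * m^4)^2 := pow_le_pow_left₀ (sq_nonneg _) cs2 2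
  have e4 : (T2 * m^4)^2 = T2^2 * m^8 := by ring
  have e5 : T2^2 * m^8 ≤ (J * m^4) * m^8 := by
    refine mul_le_mul_of_nonneg_right ?_ (by positivity)
    rw [← hT3J]; exact cs3
  have chain : (‖S‖)^8 ≤ J * m^28 := by
    calc (‖S‖)^8 ≤ (T1 * m^4)^4 := e1
      _ = (T1^2)^2 * m^16 := e2
      _ ≤ (T2 * m^4)^2 * m^16 := mul_le_mul_of_nonneg_right e3 (by positivity)
      _ = (T2^2 * m^8) * m^16 := by ring
      _ ≤ ((J * m^4) * m^8) * m^16 := mul_le_mul_of_nonneg_right e5 (by positivity)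
      _ = J * m^28 := by ring
  have hS8 : (‖S‖)^8 = d^8 * m^24 := by
    rw [habsS]; ring
  have final : d^8 * m^24 ≤ (m^4 * J) * m^24 := by
    rw [← hS8]
    calc (‖S‖)^8 ≤ J * m^28 := chain
      _ = (m^4 * J) * m^24 := by ring
  exact le_of_mul_le_mul_right final (by positivity : (0:ℝ) < m^24)

end masterSec


/-- **Inverse theorem for `U³(𝔽₅ⁿ)`, converse direction**: for any subspace `W ≤ 𝔽₅ⁿ`,
any `f : 𝔽₅ⁿ → ℂ`, any `y`, and any locally quadratic phase `φ` on `y + W`,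
`‖f‖_{U³(𝔽₅ⁿ)} ≥ 5^{-n} |W| · |𝔼_{x ∈ y+W} f(x) e(-φ(x))|`. -/
theorem inverse_U3_F5_converse {n : ℕ} (W : Submodule (ZMod 5) (Fin n → ZMod 5))
    (f : (Fin n → ZMod 5) → ℂ) (y : Fin n → ZMod 5)
    (φ : (Fin n → ZMod 5) → AddCircle (1 : ℝ)) (hφ : IsQuadraticOn {x | x - y ∈ W} φ) :
    ((5 : ℝ) ^ n)⁻¹ * (Nat.card W : ℝ) *
        ‖expectC {x | x - y ∈ W} fun x => f x * ee (-(φ x))‖ ≤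
      gowersNorm 3 f := by
  classical
  set B : Set (Fin n → ZMod 5) := {x | x - y ∈ W} with hB
  set Wt : Set (Fin n → ZMod 5) := (W : Set (Fin n → ZMod 5)) with hWt
  have hadd : ∀ a w : (Fin n → ZMod 5), a ∈ B → w ∈ Wt → a + w ∈ B := by
    intro a w ha hw
    show a + w - y ∈ W
    have e : a + w - y = (a - y) + w := by abel
    rw [e]
    exact add_mem ha hw
  have hsubB : ∀ a w : (Fin n → ZMod 5), a ∈ B → w ∈ Wt → a - w ∈ B := by
    intro a w ha hw
    show a - w - y ∈ W
    have e : a - w - y = (a - y) - w := by abel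
    rw [e]
    exact sub_mem ha hw
  have hsub : ∀ a b : (Fin n → ZMod 5), a ∈ B → b ∈ B → b - a ∈ Wt := by
    intro a b ha hb
    show b - a ∈ W
    have e : b - a = (b - y) - (a - y) := by abel
    rw [e]
    exact sub_mem hb ha
  set M : ℕ := B.toFinite.toFinset.card with hM
  have hWcard : Wt.toFinite.toFinset.card = M := by
    rw [hM]
    apply Finset.card_bij (fun w _ => w + y)
    · intro w hw
      simp only [Set.Finite.mem_toFinset] at hw ⊢
      show w + y - y ∈ W
      simpa [hWt] using hw
    · intro w1 h1 w2 h2 he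
      exact by simpa using congrArg (fun z => z - y) he
    · intro b hb
      simp only [Set.Finite.mem_toFinset] at hb ⊢
      exact ⟨b - y, hb, by abel⟩
  have hNatM : Nat.card W = M := by
    have h1 : Nat.card W = Wt.ncard := Nat.card_coe_set_eq Wt
    rw [h1, Set.ncard_eq_toFinset_card Wt Wt.toFinite, hWcard]
  have hBncard : B.ncard = M := by
    rw [Set.ncard_eq_toFinset_card B B.toFinite, hM]
  have hMpos : 0 < M := by
    rw [hM]
    refine Finset.card_pos.mpr ⟨y, ?_⟩
    simp only [Set.Finite.mem_toFinset, hB, Set.mem_setOf_eq, sub_self]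
    exact zero_mem W
  have hcardG : Fintype.card (Fin n → ZMod 5) = 5^n := by
    simp [Fintype.card_fun, ZMod.card]
  have hMle : M ≤ 5^n := by
    rw [hM, ← hcardG]
    exact Finset.card_le_univ _
  have key := master B Wt φ f M hadd hsubB hsub hφ rfl hWcard hMpos
  -- identify the Gowers sum
  have hSf : (∑ x : (Fin n → ZMod 5), ∑ h : Fin 3 → (Fin n → ZMod 5), ∏ ω : Fin 3 → Bool,
        (((starRingEnd ℂ) : ℂ → ℂ)^[(Finset.univ.filter fun i => ω i = true).card]
          (f (x + ∑ i ∈ Finset.univ.filter (fun i => ω i = true), h i))))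
      = ∑ x : (Fin n → ZMod 5), ∑ h₁ : (Fin n → ZMod 5), ∑ h₂ : (Fin n → ZMod 5), ∑ h₃ : (Fin n → ZMod 5), gtF f x h₁ h₂ h₃ := by
    refine Finset.sum_congr rfl fun x _ => ?_
    rw [sum_fn3 (fun h : Fin 3 → (Fin n → ZMod 5) => ∏ ω : Fin 3 → Bool,
        (((starRingEnd ℂ) : ℂ → ℂ)^[(Finset.univ.filter fun i => ω i = true).card]
          (f (x + ∑ i ∈ Finset.univ.filter (fun i => ω i = true), h i))))]
    refine Finset.sum_congr rfl fun h₁ _ => Finset.sum_congr rfl fun h₂ _ =>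
      Finset.sum_congr rfl fun h₃ _ => ?_
    rw [gowers_term f x h₁ h₂ h₃]
    simp only [gtF]
  -- unfold goal
  rw [gowersNorm, expectC]
  rw [hSf]
  set Sg : ℂ := ∑ x : (Fin n → ZMod 5), ∑ h₁ : (Fin n → ZMod 5), ∑ h₂ : (Fin n → ZMod 5), ∑ h₃ : (Fin n → ZMod 5), gtF f x h₁ h₂ h₃ with hSg
  set D : ℂ := ∑ x ∈ B.toFinite.toFinset, f x * ee (-(φ x)) with hD
  set J : ℝ := ‖Sg‖ with hJ
  set dA : ℝ := ‖D‖ with hdA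
  set N : ℝ := (5:ℝ)^n with hN
  have hNpos : (0:ℝ) < N := by positivity
  have hJnn : (0:ℝ) ≤ J := norm_nonneg _
  have hdnn : (0:ℝ) ≤ dA := norm_nonneg _
  have hMR : ((Nat.card W : ℕ) : ℝ) = (M:ℝ) := by exact_mod_cast hNatM
  -- LHS simplification
  have habs : ‖(B.ncard : ℂ)⁻¹ * D‖ = (M:ℝ)⁻¹ * dA := by
    rw [norm_mul, norm_inv, hBncard, Complex.norm_natCast, hdA]
  have hLHS : N⁻¹ * (Nat.card W : ℝ) * ‖(B.ncard : ℂ)⁻¹ * D‖ = N⁻¹ * dA := by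
    rw [habs, hMR]
    have hMne : (M:ℝ) ≠ 0 := by positivity
    field_simp
  -- RHS simplification
  have hRHS : ‖((Fintype.card (Fin n → ZMod 5) : ℂ) ^ (3 + 1))⁻¹ * Sg‖ = (N^4)⁻¹ * J := by
    rw [norm_mul, norm_inv, norm_pow, Complex.norm_natCast, hcardG, hJ, hN]
    push_cast
    norm_num
  have hMleR : (M:ℝ) ≤ N := by
    rw [hN]
    exact_mod_cast hMle
  have hMnnR : (0:ℝ) ≤ (M:ℝ) := Nat.cast_nonneg _
  -- power inequality
  have hpow : (N⁻¹ * dA)^(8:ℕ) ≤ (N^4)⁻¹ * J := by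
    have h1 : (N⁻¹ * dA)^(8:ℕ) = (N^8)⁻¹ * dA^8 := by
      rw [mul_pow, inv_pow]
    have h2 : dA^8 ≤ (M:ℝ)^4 * J := key
    have h3 : (M:ℝ)^4 ≤ N^4 := pow_le_pow_left₀ hMnnR hMleR 4
    calc (N⁻¹ * dA)^(8:ℕ) = (N^8)⁻¹ * dA^8 := h1
      _ ≤ (N^8)⁻¹ * ((M:ℝ)^4 * J) := by
          refine mul_le_mul_of_nonneg_left h2 (by positivity)
      _ ≤ (N^8)⁻¹ * (N^4 * J) := by
          refine mul_le_mul_of_nonneg_left (mul_le_mul_of_nonneg_right h3 hJnn) (by positivity)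
      _ = (N^4)⁻¹ * J := by
          field_simp
  -- rpow wrap-up
  rw [hLHS]
  have hexp : (((2:ℝ)^3)⁻¹ : ℝ) = (8:ℝ)⁻¹ := by norm_num
  rw [hexp, hRHS]
  have hbase : (0:ℝ) ≤ N⁻¹ * dA := by positivity
  have hid : N⁻¹ * dA = ((N⁻¹ * dA)^(8:ℕ)) ^ ((8:ℝ)⁻¹) := by
    rw [← Real.rpow_natCast (N⁻¹ * dA) 8, ← Real.rpow_mul hbase]
    norm_num
  rw [hid]
  exact Real.rpow_le_rpow (by positivity) hpow (by norm_num)
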